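/- Let (W_i)_{i=1}^∞ be a finite dimensional decomposition of a Banach space X with decomposition constant K. Let ε_i > 0 satisfy ∑_{i=1}^∞ ε_i < 1/(2K), and for each i let E_i : W_i → X be a linear operator satisfying ‖E_i w − w‖ ≤ ε_i ‖w‖ for every w ∈ W_i. Then the subspaces (E_i(W_i))_{i=1}^∞ also form a finite dimensional decomposition of X. -/

import Mathlib

open Filter Topology Metric Set

noncomputable section

/-- `(W i)` is a (Schauder) finite dimensional decomposition of `X`: every `x` has a
unique representation `x = ∑ᵢ wᵢ` with `wᵢ ∈ W i`, the series converging in norm. -/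
def IsFDD {X : Type*} [NormedAddCommGroup X] [NormedSpace ℝ X]
    (W : ℕ → Submodule ℝ X) : Prop :=
  ∀ x : X, ∃! w : (i : ℕ) → W i,
    Tendsto (fun n => ∑ i ∈ Finset.range n, ((w i : X))) atTop (𝓝 x)

/-- `S` is the sequence of canonical partial-sum projections associated with the
decomposition `(W i)`: `S n (∑ᵢ wᵢ) = ∑_{i < n} wᵢ`. -/
def IsPartialSumProj {X : Type*} [NormedAddCommGroup X] [NormedSpace ℝ X]
    (W : ℕ → Submodule ℝ X) (S : ℕ → X →L[ℝ] X) : Prop :=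
  ∀ (x : X) (w : (i : ℕ) → W i),
    Tendsto (fun n => ∑ i ∈ Finset.range n, ((w i : X))) atTop (𝓝 x) →
    ∀ n, S n x = ∑ i ∈ Finset.range n, ((w i : X))

/-- auxiliary: a linear map from a finite-dimensional subspace as a CLM -/
def toCLM {X : Type*} [NormedAddCommGroup X] [NormedSpace ℝ X]
    (Wi : Submodule ℝ X) (h : FiniteDimensional ℝ Wi) (f : Wi →ₗ[ℝ] X) : Wi →L[ℝ] X :=
  haveI := h
  LinearMap.toContinuousLinearMap f

lemma toCLM_apply {X : Type*} [NormedAddCommGroup X] [NormedSpace ℝ X]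
    (Wi : Submodule ℝ X) (h : FiniteDimensional ℝ Wi) (f : Wi →ₗ[ℝ] X) (x : Wi) :
    toCLM Wi h f x = f x := rfl

theorem perturbed_FDD
    (X : Type*) [NormedAddCommGroup X] [NormedSpace ℝ X] [CompleteSpace X]
    (W : ℕ → Submodule ℝ X) (hfd : ∀ i, FiniteDimensional ℝ (W i))
    (hW : IsFDD W)
    (S : ℕ → X →L[ℝ] X) (hS : IsPartialSumProj W S)
    (K : ℝ) (hK : ∀ n, ‖S n‖ ≤ K)
    (ε : ℕ → ℝ) (hε : ∀ i, 0 < ε i) (hsummable : Summable ε)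
    (hsum : ∑' i, ε i < 1 / (2 * K))
    (E : (i : ℕ) → ((W i : Submodule ℝ X) →ₗ[ℝ] X))
    (hE : ∀ (i : ℕ) (w : W i), ‖E i w - (w : X)‖ ≤ ε i * ‖(w : X)‖) :
    IsFDD (fun i => LinearMap.range (E i)) ∧
    ∃ S' : ℕ → X →L[ℝ] X,
      IsPartialSumProj (fun i => LinearMap.range (E i)) S' ∧
      ∃ K' : ℝ, ∀ n, ‖S' n‖ ≤ K' := by
  classical
  have hK0 : 0 ≤ K := le_trans (norm_nonneg _) (hK 0)
  have htsum_pos : 0 < ∑' i, ε i :=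
    lt_of_lt_of_le (hε 0) (Summable.le_tsum hsummable 0 (fun j _ => (hε j).le))
  have hKpos : 0 < K := by
    rcases hK0.lt_or_eq with h | h
    · exact h
    · exfalso; rw [← h] at hsum; simp at hsum; linarith
  -- decomposition data
  choose w hw using fun x => (hW x).exists
  have hSx : ∀ x n, S n x = ∑ i ∈ Finset.range n, ((w x i : X)) := fun x => hS x (w x) (hw x)
  have huniq : ∀ (x : X) (v : (i : ℕ) → W i),
      Tendsto (fun n => ∑ i ∈ Finset.range n, ((v i : X))) atTop (𝓝 x) → v = w x :=
    fun x v hv => (hW x).unique hv (hw x)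
  -- the difference projections
  set Pc : ℕ → X →L[ℝ] X := fun i => S (i + 1) - S i with hPc
  have hPapp : ∀ i x, Pc i x = S (i + 1) x - S i x := fun i x => rfl
  have hPval : ∀ i x, Pc i x = ((w x i : X)) := by
    intro i x
    rw [hPapp, hSx, hSx, Finset.sum_range_succ, add_sub_cancel_left]
  have hPmem : ∀ i (x : X), Pc i x ∈ W i := by
    intro i x; rw [hPval]; exact (w x i).2
  -- S on a single vector of W j
  have hSw : ∀ (j : ℕ) (u : W j) (n : ℕ), S n (u : X) = if j < n then (u : X) else 0 := by
    intro j u n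
    set v : (i : ℕ) → W i := fun i =>
      if h : i = j then ⟨(u : X), h ▸ u.2⟩ else 0 with hv
    have hvc : ∀ i, ((v i : X)) = if i = j then (u : X) else 0 := by
      intro i
      by_cases h : i = j
      · subst h; simp [hv]
      · simp [hv, h]
    have hsum' : ∀ n, (∑ i ∈ Finset.range n, ((v i : X))) = if j < n then (u : X) else 0 := by
      intro n
      simp only [hvc]
      rw [Finset.sum_ite_eq' (Finset.range n) j (fun _ => (u : X))]
      simp
    have htd : Tendsto (fun n => ∑ i ∈ Finset.range n, ((v i : X))) atTop (𝓝 (u : X)) := by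
      apply Tendsto.congr' _ tendsto_const_nhds
      filter_upwards [eventually_ge_atTop (j + 1)] with n hn
      rw [hsum', if_pos (by omega)]
    rw [hS (u : X) v htd n, hsum' n]
  have hPw : ∀ (j : ℕ) (u : W j) (i : ℕ), Pc i (u : X) = if i = j then (u : X) else 0 := by
    intro j u i
    rw [hPapp, hSw, hSw]
    by_cases h : i = j
    · subst h; rw [if_pos (by omega), if_neg (by omega), if_pos rfl, sub_zero]
    · rcases Nat.lt_or_ge j i with h' | h'
      · rw [if_pos (by omega), if_pos h', if_neg h, sub_self]
      · rw [if_neg (by omega), if_neg (by omega), if_neg h, sub_zero]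
  -- continuous versions of E and the perturbation operators
  set Ec : (i : ℕ) → (W i →L[ℝ] X) := fun i => toCLM (W i) (hfd i) (E i) with hEc
  set D : ℕ → X →L[ℝ] X :=
    fun i => (Ec i).comp ((Pc i).codRestrict (W i) (hPmem i)) - Pc i with hD
  have hDapp : ∀ i x, D i x = E i ⟨Pc i x, hPmem i x⟩ - Pc i x := fun i x => rfl
  have hPnorm : ∀ i x, ‖Pc i x‖ ≤ 2 * K * ‖x‖ := by
    intro i x
    rw [hPapp]
    calc ‖S (i+1) x - S i x‖ ≤ ‖S (i+1) x‖ + ‖S i x‖ := norm_sub_le _ _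
      _ ≤ K * ‖x‖ + K * ‖x‖ := by
          gcongr
          · exact le_trans ((S (i+1)).le_opNorm x) (by gcongr; exact hK (i+1))
          · exact le_trans ((S i).le_opNorm x) (by gcongr; exact hK i)
      _ = 2 * K * ‖x‖ := by ring
  have hDnormi : ∀ i, ‖D i‖ ≤ 2 * K * ε i := by
    intro i
    apply ContinuousLinearMap.opNorm_le_bound _
      (mul_nonneg (by positivity) (hε i).le)
    intro x
    calc ‖D i x‖ = ‖E i ⟨Pc i x, hPmem i x⟩ - Pc i x‖ := by rw [hDapp]
      _ ≤ ε i * ‖Pc i x‖ := hE i ⟨Pc i x, hPmem i x⟩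
      _ ≤ ε i * (2 * K * ‖x‖) := mul_le_mul_of_nonneg_left (hPnorm i x) (hε i).le
      _ = 2 * K * ε i * ‖x‖ := by ring
  have hDsum : Summable D :=
    Summable.of_norm_bounded (hsummable.mul_left (2 * K)) hDnormi
  have hDnormsum : Summable (fun i => ‖D i‖) :=
    Summable.of_nonneg_of_le (fun i => norm_nonneg _) hDnormi (hsummable.mul_left (2 * K))
  set Dt : X →L[ℝ] X := ∑' i, D i with hDt
  have hDtnorm : ‖Dt‖ < 1 := by
    calc ‖Dt‖ ≤ ∑' i, ‖D i‖ := norm_tsum_le_tsum_norm hDnormsum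
      _ ≤ ∑' i, 2 * K * ε i := Summable.tsum_le_tsum hDnormi hDnormsum (hsummable.mul_left (2 * K))
      _ = 2 * K * ∑' i, ε i := tsum_mul_left
      _ < 2 * K * (1 / (2 * K)) := by
          have h2K : (0:ℝ) < 2 * K := by positivity
          exact (mul_lt_mul_iff_right₀ h2K).mpr hsum
      _ = 1 := by field_simp
  -- the isomorphism T = 1 + Dt
  set u : (X →L[ℝ] X)ˣ := Units.oneSub (-Dt) (by rwa [norm_neg]) with hu
  set T : X →L[ℝ] X := 1 + Dt with hT
  have hTu : T = (u : X →L[ℝ] X) := by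
    show T = 1 - (-Dt)
    rw [sub_neg_eq_add]
  set Ti : X →L[ℝ] X := ↑u⁻¹ with hTi
  have hTiT : ∀ x, Ti (T x) = x := by
    intro x
    have : (Ti * T) x = (1 : X →L[ℝ] X) x := by
      rw [hTu]; norm_cast; rw [Units.inv_mul]; rfl
    simpa using this
  have hTTi : ∀ x, T (Ti x) = x := by
    intro x
    have : (T * Ti) x = (1 : X →L[ℝ] X) x := by
      rw [hTu]; norm_cast; rw [Units.mul_inv]; rfl
    simpa using this
  -- T evaluates as x + ∑' D i x
  have hTapp : ∀ x, T x = x + ∑' i, D i x := by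
    intro x
    have h1 : HasSum (fun i => D i x) (Dt x) :=
      hDsum.hasSum.mapL (ContinuousLinearMap.apply ℝ X x)
    rw [hT]
    simp [h1.tsum_eq]
  -- T coincides with E j on W j
  have hTW : ∀ (j : ℕ) (v : W j), T (v : X) = E j v := by
    intro j v
    have hDv : ∀ i, D i (v : X) = if i = j then E j v - (v : X) else 0 := by
      intro i
      rw [hDapp]
      by_cases h : i = j
      · subst h
        have h1 : Pc i (v : X) = (v : X) := by rw [hPw i v i, if_pos rfl]
        rw [if_pos rfl]
        congr 1
        have : (⟨Pc i (v : X), hPmem i (v : X)⟩ : W i) = v := Subtype.ext h1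
        rw [this]
      · have h1 : Pc i (v : X) = 0 := by rw [hPw j v i, if_neg h]
        have : (⟨Pc i (v : X), hPmem i (v : X)⟩ : W i) = 0 := Subtype.ext h1
        rw [if_neg h, this, h1, map_zero, sub_zero]
    rw [hTapp]
    rw [tsum_eq_single j (fun i hi => by rw [hDv i, if_neg hi])]
    rw [hDv j, if_pos rfl]
    abel
  -- preimages of range vectors
  have hTimem : ∀ (i : ℕ) (v : LinearMap.range (E i)), Ti (v : X) ∈ W i := by
    intro i v
    obtain ⟨a, ha⟩ := v.2
    have : T (a : X) = (v : X) := by rw [hTW i a, ha]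
    rw [← this, hTiT]
    exact a.2
  -- transported convergence
  have key : ∀ (x : X) (v : (i : ℕ) → LinearMap.range (E i)),
      Tendsto (fun n => ∑ i ∈ Finset.range n, ((v i : X))) atTop (𝓝 x) →
      (fun i => (⟨Ti (v i : X), hTimem i (v i)⟩ : W i)) = w (Ti x) := by
    intro x v hv
    apply huniq
    have h1 : Tendsto (fun n => Ti (∑ i ∈ Finset.range n, ((v i : X)))) atTop (𝓝 (Ti x)) :=
      (Ti.continuous.tendsto x).comp hv
    refine h1.congr ?_
    intro n
    simp [map_sum]
  have hvT : ∀ (i : ℕ) (v : LinearMap.range (E i)), T (Ti (v : X)) = (v : X) :=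
    fun i v => hTTi _
  refine ⟨?_, ?_⟩
  · -- IsFDD
    intro x
    refine ⟨fun i => ⟨E i (w (Ti x) i), ⟨w (Ti x) i, rfl⟩⟩, ?_, ?_⟩
    · have h1 : Tendsto (fun n => T (∑ i ∈ Finset.range n, ((w (Ti x) i : X)))) atTop
          (𝓝 (T (Ti x))) := (T.continuous.tendsto (Ti x)).comp (hw (Ti x))
      rw [hTTi x] at h1
      refine h1.congr ?_
      intro n
      rw [map_sum]
      exact Finset.sum_congr rfl fun i _ => hTW i (w (Ti x) i)
    · intro v hv
      have h2 := key x v hv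
      funext i
      apply Subtype.ext
      have h3 : Ti ((v i : X)) = ((w (Ti x) i : X)) := by
        have := congrArg (fun f => ((f i : W i) : X)) h2
        simpa using this
      calc ((v i : X)) = T (Ti ((v i : X))) := (hvT i (v i)).symm
        _ = T ((w (Ti x) i : X)) := by rw [h3]
        _ = E i (w (Ti x) i) := hTW i (w (Ti x) i)
  · refine ⟨fun n => T.comp ((S n).comp Ti), ?_, ?_⟩
    · intro x v hv n
      have h3 : Tendsto (fun n => Ti (∑ i ∈ Finset.range n, ((v i : X)))) atTop (𝓝 (Ti x)) :=
        (Ti.continuous.tendsto x).comp hv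
      have h3' : Tendsto (fun n => ∑ i ∈ Finset.range n,
          (((⟨Ti (v i : X), hTimem i (v i)⟩ : W i) : X))) atTop (𝓝 (Ti x)) := by
        refine h3.congr fun n => ?_
        simp [map_sum]
      have h4 := hS (Ti x) _ h3' n
      show T (S n (Ti x)) = _
      rw [h4, map_sum]
      exact Finset.sum_congr rfl fun i _ => hvT i (v i)
    · refine ⟨‖T‖ * (K * ‖Ti‖), fun n => ?_⟩
      calc ‖T.comp ((S n).comp Ti)‖ ≤ ‖T‖ * ‖(S n).comp Ti‖ :=
            ContinuousLinearMap.opNorm_comp_le _ _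
        _ ≤ ‖T‖ * (‖S n‖ * ‖Ti‖) := by
            gcongr
            exact ContinuousLinearMap.opNorm_comp_le _ _
        _ ≤ ‖T‖ * (K * ‖Ti‖) := by gcongr; exact hK n
end
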